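/- Let G be a finite group, p a prime, and H a subgroup of G of index d. Then k_p(G) ≤ d·k_p(H) and k_p(H) ≤ d·k_p(G). Moreover, if H is normal in G, then k_p(G) ≤ k_p(H)·k_p(G/H). -/

import Mathlib

/-- `kp G p` is the number of conjugacy classes of `p'`-elements of `G`, i.e. the
number of conjugacy classes all of whose elements have order coprime to `p`. -/
noncomputable def kp (G : Type*) [Group G] (p : ℕ) : ℕ :=
  Set.ncard {c : ConjClasses G | ∀ g ∈ ConjClasses.carrier c, Nat.Coprime (orderOf g) p}

namespace KpGallagher

attribute [local instance] Classical.propDecidable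

open Finset

variable {M : Type*} [Group M] [Fintype M]

/-- `p`-regular (p') elements. -/
def pc (p : ℕ) (x : M) : Prop := (orderOf x).Coprime p

/-- centralizer as a finset -/
noncomputable def czF (x : M) : Finset M := univ.filter (fun y => Commute x y)

lemma czF_card (x : M) :
    Fintype.card (MulAction.stabilizer (ConjAct M) x) = (czF x).card := by
  rw [czF, ← Fintype.card_subtype]
  apply Fintype.card_congr
  refine Equiv.subtypeEquiv (ConjAct.ofConjAct : ConjAct M ≃* M).toEquiv (fun a => ?_)
  rw [MulAction.mem_stabilizer_iff, ConjAct.smul_def, mul_inv_eq_iff_eq_mul]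
  exact ⟨fun h => h.symm, fun h => h.symm⟩

lemma class_fiber_sum (c : ConjClasses M) :
    ∑ x ∈ univ.filter (fun x => ConjClasses.mk x = c), (czF x).card = Fintype.card M := by
  obtain ⟨a, rfl⟩ := c.exists_rep
  set T := univ.filter (fun x => ConjClasses.mk x = ConjClasses.mk a) with hT
  have hTcard : ∀ x ∈ T, (czF x).card * T.card = Fintype.card M := by
    intro x hx
    have hx' : ConjClasses.mk x = ConjClasses.mk a := (mem_filter.mp hx).2
    have horb := MulAction.card_orbit_mul_card_stabilizer_eq_card_group (ConjAct M) x
    rw [ConjAct.card] at horb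
    have hcarr : Fintype.card (MulAction.orbit (ConjAct M) x) = T.card := by
      have horbc : MulAction.orbit (ConjAct M) x = (ConjClasses.mk x).carrier :=
        ConjAct.orbit_eq_carrier_conjClasses x
      rw [Fintype.card_congr (Equiv.setCongr horbc)]
      rw [show Fintype.card ((ConjClasses.mk x).carrier : Set M)
            = Fintype.card {y // y ∈ (ConjClasses.mk x).carrier} from rfl]
      rw [Fintype.card_subtype]
      congr 1
      ext y
      simp only [mem_filter, mem_univ, true_and, hT]
      rw [ConjClasses.mem_carrier_iff_mk_eq, hx']
    rw [hcarr, czF_card, mul_comm] at horb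
    exact horb
  have hne : T.Nonempty := ⟨a, by simp [hT]⟩
  have hsum : (∑ x ∈ T, (czF x).card) * T.card = Fintype.card M * T.card := by
    rw [sum_mul, Finset.sum_congr rfl hTcard, sum_const, smul_eq_mul, mul_comm]
  exact Nat.eq_of_mul_eq_mul_right (card_pos.mpr hne) hsum

lemma pc_of_mk_eq_mk {x y : M} (p : ℕ) (h : ConjClasses.mk x = ConjClasses.mk y)
    (hx : pc p x) : pc p y := by
  have hc : IsConj x y := ConjClasses.mk_eq_mk_iff_isConj.mp h
  obtain ⟨u, hu⟩ := isConj_iff.mp hc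
  have : SemiconjBy u x y := by
    rw [SemiconjBy, ← hu]; group
  rw [pc, ← this.orderOf_eq]
  exact hx

/-- The class-counting set, as a finset. -/
noncomputable def kpF (M : Type*) [Group M] [Fintype M] (p : ℕ)
    [Fintype (ConjClasses M)] : Finset (ConjClasses M) :=
  univ.filter (fun c => ∀ g ∈ ConjClasses.carrier c, Nat.Coprime (orderOf g) p)

lemma kpF_card (p : ℕ) [Fintype (ConjClasses M)] :
    (kpF M p).card = kp M p := by
  rw [kp, Set.ncard_eq_toFinset_card', Set.toFinset_setOf, kpF]

/-- The master counting identity:  `∑_{x p'-element} |C_M(x)| = kp M p * |M|`. -/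
lemma Apairs (p : ℕ) :
    ∑ x ∈ (univ : Finset M).filter (pc p), (czF x).card = kp M p * Fintype.card M := by
  haveI : Fintype (ConjClasses M) := Fintype.ofFinite _
  haveI : DecidableEq (ConjClasses M) := Classical.decEq _
  rw [← kpF_card]
  rw [← Finset.sum_fiberwise (s := (univ : Finset M).filter (pc p)) (g := fun x => ConjClasses.mk x)
      (f := fun x => (czF x).card)]
  have key : ∀ c : ConjClasses M,
      ∑ x ∈ ((univ : Finset M).filter (pc p)).filter (fun x => ConjClasses.mk x = c), (czF x).card
        = if c ∈ kpF M p then Fintype.card M else 0 := by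
    intro c
    by_cases hc : c ∈ kpF M p
    · rw [if_pos hc]
      rw [← class_fiber_sum c]
      apply Finset.sum_congr _ (fun _ _ => rfl)
      ext x
      simp only [mem_filter, mem_univ, true_and, filter_filter]
      constructor
      · rintro ⟨-, h2⟩; exact h2
      · intro h
        refine ⟨?_, h⟩
        have := (mem_filter.mp hc).2 x (by rw [ConjClasses.mem_carrier_iff_mk_eq]; exact h)
        exact this
    · rw [if_neg hc]
      rw [Finset.sum_eq_zero]
      intro x hx
      exfalso
      simp only [filter_filter, mem_filter, mem_univ, true_and] at hx
      apply hc
      rw [kpF, mem_filter]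
      refine ⟨mem_univ _, fun g hg => ?_⟩
      rw [ConjClasses.mem_carrier_iff_mk_eq] at hg
      exact pc_of_mk_eq_mk p (by rw [hx.2, hg]) hx.1
  rw [Finset.sum_congr rfl (fun c _ => key c)]
  rw [Finset.sum_ite_mem, Finset.univ_inter, Finset.sum_const, smul_eq_mul]

/-- Basepoint-translation injection. -/
lemma card_le_of_translate {G : Type*} [Group G] [Fintype G] (S T : Finset G)
    (h : ∀ a ∈ S, ∀ b ∈ S, a⁻¹ * b ∈ T) : S.card ≤ T.card := by
  rcases S.eq_empty_or_nonempty with hS | ⟨a, ha⟩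
  · simp [hS]
  · apply Finset.card_le_card_of_injOn (fun b => a⁻¹ * b)
    · intro b hb; exact h a ha b hb
    · intro b _ b' _ hbb'
      simpa using hbb'

end KpGallagher

section KpMain

open Finset KpGallagher

attribute [local instance] Classical.propDecidable

variable {G : Type*} [Group G] [Fintype G]

/-- relative centralizer finset -/
noncomputable def czHF (H : Subgroup G) (x : G) : Finset G := univ.filter (fun h => h ∈ H ∧ Commute x h)

/-- the pair-set attached to a coset -/
noncomputable def AqF (H : Subgroup G) (p : ℕ) (q : G ⧸ H) : Finset ((_ : G) × G) :=
  (((univ : Finset G).filter (pc p)).filter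
    (fun x => (QuotientGroup.mk x : G ⧸ H) = q)).sigma (fun x => czHF H x)

/-- the pair-set attached to the subgroup itself -/
noncomputable def A1F (H : Subgroup G) (p : ℕ) : Finset ((_ : G) × G) :=
  (univ.filter (fun s => s ∈ H ∧ pc p s)).sigma (fun s => czHF H s)

lemma exists_K (p : ℕ) (hp : p.Prime) :
    ∃ K : ℕ,
      (∀ a : G, (orderOf a).Coprime p → a ^ K = 1) ∧
      (∀ b : G, b ^ (p ^ (Fintype.card G).factorization p) = 1 → b ^ K = b) ∧
      (∀ g : G, (g ^ K) ^ (p ^ (Fintype.card G).factorization p) = 1) ∧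
      (∀ g : G, (orderOf (g * (g ^ K)⁻¹)).Coprime p) := by
  have hn : Fintype.card G ≠ 0 := Fintype.card_ne_zero
  have hco : (p ^ (Fintype.card G).factorization p).Coprime (ordCompl[p] (Fintype.card G)) :=
    (Nat.coprime_ordCompl hp hn).pow_left _
  have hsplit : p ^ (Fintype.card G).factorization p * ordCompl[p] (Fintype.card G)
      = Fintype.card G := Nat.ordProj_mul_ordCompl_eq_self (Fintype.card G) p
  obtain ⟨K, hK1, hK0⟩ := Nat.chineseRemainder hco 1 0
  have hKdvd : ordCompl[p] (Fintype.card G) ∣ K := (Nat.modEq_zero_iff_dvd).mp hK0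
  have h1 : ∀ a : G, (orderOf a).Coprime p → a ^ K = 1 := by
    intro a ha
    have hord : orderOf a ∣ Fintype.card G := orderOf_dvd_card
    have h2 : (orderOf a).Coprime (p ^ (Fintype.card G).factorization p) := ha.pow_right _
    have h3 : orderOf a ∣ ordCompl[p] (Fintype.card G) :=
      h2.dvd_of_dvd_mul_left (by rwa [hsplit])
    exact orderOf_dvd_iff_pow_eq_one.mp (h3.trans hKdvd)
  have h2 : ∀ b : G, b ^ (p ^ (Fintype.card G).factorization p) = 1 → b ^ K = b := by
    intro b hb
    have hd : b ^ K = b ^ (K % (p ^ (Fintype.card G).factorization p)) := by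
      conv_lhs => rw [← Nat.mod_add_div K (p ^ (Fintype.card G).factorization p)]
      rw [pow_add, pow_mul, hb, one_pow, mul_one]
    rw [hd, (hK1 : K % (p ^ (Fintype.card G).factorization p) = 1 % (p ^ (Fintype.card G).factorization p))]
    rcases eq_or_ne (p ^ (Fintype.card G).factorization p) 1 with h1' | h1'
    · have hb1 : b = 1 := by rw [h1', pow_one] at hb; exact hb
      simp [hb1]
    · rw [Nat.one_mod_eq_one.mpr h1', pow_one]
  have h3 : ∀ g : G, (g ^ K) ^ (p ^ (Fintype.card G).factorization p) = 1 := by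
    intro g
    obtain ⟨t, ht⟩ := hKdvd
    have hdvd : K * (p ^ (Fintype.card G).factorization p) = Fintype.card G * t := by
      calc K * (p ^ (Fintype.card G).factorization p)
          = (ordCompl[p] (Fintype.card G) * t) * (p ^ (Fintype.card G).factorization p) := by
            rw [← ht]
        _ = (p ^ (Fintype.card G).factorization p * ordCompl[p] (Fintype.card G)) * t := by ring
        _ = Fintype.card G * t := by rw [hsplit]
    rw [← pow_mul, hdvd, pow_mul, pow_card_eq_one, one_pow]
  have h4 : ∀ g : G, (orderOf (g * (g ^ K)⁻¹)).Coprime p := by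
    intro g
    have hcomm : Commute g ((g ^ K)⁻¹) := (Commute.pow_right (Commute.refl g) K).inv_right
    have hpow : (g * (g ^ K)⁻¹) ^ (ordCompl[p] (Fintype.card G)) = 1 := by
      have hmod : K * ordCompl[p] (Fintype.card G) ≡ 1 * ordCompl[p] (Fintype.card G) [MOD (p ^ (Fintype.card G).factorization p) * ordCompl[p] (Fintype.card G)] :=
        Nat.ModEq.mul_right' _ hK1
      rw [hsplit, one_mul] at hmod
      have hmod2 : K * ordCompl[p] (Fintype.card G) ≡ ordCompl[p] (Fintype.card G) [MOD orderOf g] :=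
        hmod.of_dvd orderOf_dvd_card
      have hgp : g ^ (K * ordCompl[p] (Fintype.card G)) = g ^ (ordCompl[p] (Fintype.card G)) :=
        pow_eq_pow_iff_modEq.mpr hmod2
      rw [hcomm.mul_pow, inv_pow, ← pow_mul, hgp]
      simp
    have hdvd : orderOf (g * (g ^ K)⁻¹) ∣ ordCompl[p] (Fintype.card G) := orderOf_dvd_iff_pow_eq_one.mpr hpow
    exact Nat.Coprime.coprime_dvd_left hdvd (Nat.coprime_ordCompl hp hn).symm
  exact ⟨K, h1, h2, h3, h4⟩


lemma mk_mul_mem_right {H : Subgroup G} {a b : G} (hb : b ∈ H) :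
    (QuotientGroup.mk (a * b) : G ⧸ H) = QuotientGroup.mk a := by
  rw [QuotientGroup.eq]
  have h : (a * b)⁻¹ * a = b⁻¹ * (a⁻¹ * a) := by group
  rw [h]
  simpa using inv_mem hb

lemma czHF_subset (H : Subgroup G) (x : G) : czHF H x ⊆ czF x := by
  intro y hy
  simp only [czHF, czF, mem_filter] at hy ⊢
  exact ⟨hy.1, hy.2.2⟩

lemma card_quot_eq_index (H : Subgroup G) [Fintype (G ⧸ H)] :
    (univ : Finset (G ⧸ H)).card = H.index := by
  rw [Finset.card_univ, ← Nat.card_eq_fintype_card, Subgroup.index_eq_card]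

lemma czF_le_index (H : Subgroup G) (x : G) :
    (czF x).card ≤ H.index * (czHF H x).card := by
  haveI : Fintype (G ⧸ H) := Fintype.ofFinite _
  rw [Finset.card_eq_sum_card_fiberwise
    (f := fun y => (QuotientGroup.mk y : G ⧸ H)) (t := univ) (fun y _ => mem_univ _)]
  have hbound : ∀ q ∈ (univ : Finset (G ⧸ H)),
      ((czF x).filter (fun y => (QuotientGroup.mk y : G ⧸ H) = q)).card ≤ (czHF H x).card := by
    intro q _
    apply card_le_of_translate
    intro a ha b hb
    simp only [mem_filter, czF, mem_univ, true_and] at ha hb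
    have hmem : a⁻¹ * b ∈ H := by
      rw [← QuotientGroup.eq, ha.2, hb.2]
    simp only [czHF, mem_filter, mem_univ, true_and]
    exact ⟨hmem, ha.1.inv_right.mul_right hb.1⟩
  calc ∑ q ∈ (univ : Finset (G ⧸ H)),
        ((czF x).filter (fun y => (QuotientGroup.mk y : G ⧸ H) = q)).card
      ≤ (univ : Finset (G ⧸ H)).card • (czHF H x).card :=
        Finset.sum_le_card_nsmul _ _ _ hbound
    _ = H.index * (czHF H x).card := by rw [smul_eq_mul, card_quot_eq_index]

lemma czF_le_quot (H : Subgroup G) [H.Normal] [Fintype (G ⧸ H)] (x : G) :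
    (czF x).card ≤ (czF (QuotientGroup.mk x : G ⧸ H)).card * (czHF H x).card := by
  rw [Finset.card_eq_sum_card_fiberwise
    (f := fun y => (QuotientGroup.mk y : G ⧸ H)) (t := czF (QuotientGroup.mk x : G ⧸ H))
    (fun y hy => ?_)]
  · have hbound : ∀ q ∈ czF (QuotientGroup.mk x : G ⧸ H),
        ((czF x).filter (fun y => (QuotientGroup.mk y : G ⧸ H) = q)).card
          ≤ (czHF H x).card := by
      intro q _
      apply card_le_of_translate
      intro a ha b hb
      simp only [mem_filter, czF, mem_univ, true_and] at ha hb
      have hmem : a⁻¹ * b ∈ H := by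
        rw [← QuotientGroup.eq, ha.2, hb.2]
      simp only [czHF, mem_filter, mem_univ, true_and]
      exact ⟨hmem, ha.1.inv_right.mul_right hb.1⟩
    calc ∑ q ∈ czF (QuotientGroup.mk x : G ⧸ H),
          ((czF x).filter (fun y => (QuotientGroup.mk y : G ⧸ H) = q)).card
        ≤ (czF (QuotientGroup.mk x : G ⧸ H)).card • (czHF H x).card :=
          Finset.sum_le_card_nsmul _ _ _ hbound
      _ = _ := smul_eq_mul _ _
  · have hy' : Commute x y := (Finset.mem_filter.mp hy).2
    exact Finset.mem_filter.mpr ⟨mem_univ _, hy'.map (QuotientGroup.mk' H)⟩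

lemma czHF_card_eq (H : Subgroup G) (t : H) :
    (czHF H (t : G)).card = (czF t).card := by
  refine Finset.card_bij (fun h hh => (⟨h, (Finset.mem_filter.mp hh).2.1⟩ : H)) ?_ ?_ ?_
  · intro h hh
    simp only [czF, mem_filter, mem_univ, true_and]
    have hc := (Finset.mem_filter.mp hh).2.2
    exact Subtype.ext hc
  · intro a ha b hb hab
    simpa using congrArg Subtype.val hab
  · intro y hy
    simp only [czF, mem_filter, mem_univ, true_and] at hy
    refine ⟨(y : G), ?_, rfl⟩
    simp only [czHF, mem_filter, mem_univ, true_and]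
    exact ⟨y.2, congrArg Subtype.val hy⟩

lemma A1F_card (H : Subgroup G) (p : ℕ) :
    (A1F H p).card = kp H p * Nat.card H := by
  rw [Nat.card_eq_fintype_card]
  rw [A1F, Finset.card_sigma]
  rw [← Apairs (M := H) p]
  refine Finset.sum_bij (fun s hs => (⟨s, (Finset.mem_filter.mp hs).2.1⟩ : H)) ?_ ?_ ?_ ?_
  · intro s hs
    simp only [mem_filter, mem_univ, true_and] at hs ⊢
    rw [pc, ← Subgroup.orderOf_coe]
    exact hs.2
  · intro a ha b hb hab
    simpa using congrArg Subtype.val hab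
  · intro t ht
    simp only [mem_filter, mem_univ, true_and] at ht
    refine ⟨(t : G), ?_, by simp⟩
    simp only [mem_filter, mem_univ, true_and]
    exact ⟨t.2, by rwa [pc, Subgroup.orderOf_coe]⟩
  · intro s hs
    exact czHF_card_eq H ⟨s, (Finset.mem_filter.mp hs).2.1⟩

lemma AqF_card_le (H : Subgroup G) (p : ℕ) (hp : p.Prime) (q : G ⧸ H) :
    (AqF H p q).card ≤ (A1F H p).card := by
  obtain ⟨K, hK1, hK2, hK3, hK4⟩ := exists_K (G := G) p hp
  have hrec : ∀ a b : G, Commute a b → (orderOf a).Coprime p →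
      b ^ (p ^ (Fintype.card G).factorization p) = 1 → (a * b) ^ K = b := by
    intro a b hab ha hb
    rw [hab.mul_pow, hK1 a ha, one_mul, hK2 b hb]
  classical
  set B : Finset ((_ : G) × G) := (univ.filter (fun s => s ∈ H ∧ pc p s)).sigma
      (fun s => univ.filter (fun g =>
        ((QuotientGroup.mk g : G ⧸ H) = q ∧ g ^ K ∈ H) ∧ Commute g s)) with hB
  have h1 : (AqF H p q).card = B.card := by
    refine Finset.card_bij' (i := fun a _ => (⟨a.2 * (a.2 ^ K)⁻¹, a.1 * a.2 ^ K⟩ : (_ : G) × G))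
      (j := fun b _ => (⟨b.2 * (b.2 ^ K)⁻¹, b.2 ^ K * b.1⟩ : (_ : G) × G)) ?_ ?_ ?_ ?_
    · rintro ⟨x, h⟩ ha
      rw [AqF, Finset.mem_sigma] at ha
      obtain ⟨hx, hh⟩ := ha
      simp only [mem_filter, mem_univ, true_and] at hx
      simp only [czHF, mem_filter, mem_univ, true_and] at hh
      obtain ⟨hxpc, hxq⟩ := hx
      obtain ⟨hhH, hxh⟩ := hh
      rw [hB, Finset.mem_sigma]
      have hKmem : h ^ K ∈ H := pow_mem hhH K
      have hgK : (x * h ^ K) ^ K = h ^ K := hrec x (h ^ K) (hxh.pow_right K) hxpc (hK3 h)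
      constructor
      · simp only [mem_filter, mem_univ, true_and]
        exact ⟨mul_mem hhH (inv_mem hKmem), hK4 h⟩
      · simp only [mem_filter, mem_univ, true_and]
        refine ⟨⟨?_, by rw [hgK]; exact hKmem⟩, ?_⟩
        · rw [mk_mul_mem_right hKmem, hxq]
        · have c2 : Commute x (h ^ K) := hxh.pow_right K
          have cAh : Commute (x * h ^ K) h := hxh.mul_left ((Commute.refl h).pow_left K)
          have cAk : Commute (x * h ^ K) ((h ^ K)⁻¹) :=
            (c2.mul_left (Commute.refl (h ^ K))).inv_right
          exact cAh.mul_right cAk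
    · rintro ⟨t, g⟩ hb
      rw [hB, Finset.mem_sigma] at hb
      obtain ⟨ht, hg⟩ := hb
      simp only [mem_filter, mem_univ, true_and] at ht hg
      obtain ⟨htH, htpc⟩ := ht
      obtain ⟨⟨hgq, hgKH⟩, hgt⟩ := hg
      rw [AqF, Finset.mem_sigma]
      constructor
      · simp only [mem_filter, mem_univ, true_and]
        refine ⟨hK4 g, ?_⟩
        rw [mk_mul_mem_right (inv_mem hgKH), hgq]
      · simp only [czHF, mem_filter, mem_univ, true_and]
        refine ⟨mul_mem hgKH htH, ?_⟩
        have c2 : Commute g (g ^ K) := (Commute.refl g).pow_right K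
        have cxk : Commute (g * (g ^ K)⁻¹) (g ^ K) :=
          (c2.mul_left (Commute.refl (g ^ K)).inv_left)
        have cxt : Commute (g * (g ^ K)⁻¹) t := hgt.mul_left (hgt.pow_left K).inv_left
        exact cxk.mul_right cxt
    · rintro ⟨x, h⟩ ha
      rw [AqF, Finset.mem_sigma] at ha
      obtain ⟨hx, hh⟩ := ha
      simp only [mem_filter, mem_univ, true_and] at hx
      simp only [czHF, mem_filter, mem_univ, true_and] at hh
      obtain ⟨hxpc, hxq⟩ := hx
      obtain ⟨hhH, hxh⟩ := hh
      have hgK : (x * h ^ K) ^ K = h ^ K := hrec x (h ^ K) (hxh.pow_right K) hxpc (hK3 h)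
      have ch : Commute (h ^ K) h := (Commute.refl h).pow_left K
      have e2 : h ^ K * (h * (h ^ K)⁻¹) = h := by
        rw [← mul_assoc, ch.eq, mul_assoc, mul_inv_cancel, mul_one]
      dsimp only
      rw [hgK, mul_inv_cancel_right, e2]
    · rintro ⟨t, g⟩ hb
      rw [hB, Finset.mem_sigma] at hb
      obtain ⟨ht, hg⟩ := hb
      simp only [mem_filter, mem_univ, true_and] at ht hg
      obtain ⟨htH, htpc⟩ := ht
      obtain ⟨⟨hgq, hgKH⟩, hgt⟩ := hg
      have hcm : Commute (g ^ K) t := hgt.pow_left K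
      have hgK : (g ^ K * t) ^ K = g ^ K := by
        rw [hcm.eq]
        exact hrec t (g ^ K) hcm.symm htpc (hK3 g)
      have e1 : g ^ K * t * (g ^ K)⁻¹ = t := by rw [hcm.eq, mul_inv_cancel_right]
      have e2 : g * (g ^ K)⁻¹ * g ^ K = g := inv_mul_cancel_right _ _
      dsimp only
      rw [hgK, e1, e2]
  rw [h1, hB, A1F, Finset.card_sigma, Finset.card_sigma]
  apply Finset.sum_le_sum
  intro s hs
  apply card_le_of_translate
  intro a ha b hb
  simp only [mem_filter, mem_univ, true_and] at ha hb
  have hmem : a⁻¹ * b ∈ H := by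
    rw [← QuotientGroup.eq, ha.1.1, hb.1.1]
  simp only [czHF, mem_filter, mem_univ, true_and]
  exact ⟨hmem, (ha.2.inv_left.mul_left hb.2).symm⟩


lemma part1 (p : ℕ) (hp : p.Prime) (H : Subgroup G) :
    kp G p ≤ H.index * kp H p := by
  haveI : Fintype (G ⧸ H) := Fintype.ofFinite _
  have hGpos : 0 < Fintype.card G := Fintype.card_pos
  have e1 : kp G p * Fintype.card G = ∑ x ∈ (univ : Finset G).filter (pc p), (czF x).card :=
    (Apairs p).symm
  have e2 : ∑ x ∈ (univ : Finset G).filter (pc p), (czF x).card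
      ≤ H.index * ∑ x ∈ (univ : Finset G).filter (pc p), (czHF H x).card := by
    rw [Finset.mul_sum]
    exact Finset.sum_le_sum (fun x _ => czF_le_index H x)
  have e3 : ∑ x ∈ (univ : Finset G).filter (pc p), (czHF H x).card
      = ∑ q : G ⧸ H, (AqF H p q).card := by
    rw [← Finset.sum_fiberwise (s := (univ : Finset G).filter (pc p))
      (g := fun x => (QuotientGroup.mk x : G ⧸ H)) (f := fun x => (czHF H x).card)]
    apply Finset.sum_congr rfl
    intro q _
    rw [AqF, Finset.card_sigma]
  have e4 : ∑ q : G ⧸ H, (AqF H p q).card ≤ H.index * (kp H p * Nat.card H) := by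
    calc ∑ q : G ⧸ H, (AqF H p q).card
        ≤ (univ : Finset (G ⧸ H)).card • (A1F H p).card :=
          Finset.sum_le_card_nsmul _ _ _ (fun q _ => AqF_card_le H p hp q)
      _ = H.index * (A1F H p).card := by rw [smul_eq_mul, card_quot_eq_index]
      _ = H.index * (kp H p * Nat.card H) := by rw [A1F_card]
  have hmul : H.index * (H.index * (kp H p * Nat.card H))
      = (H.index * kp H p) * Fintype.card G := by
    rw [← Nat.card_eq_fintype_card, ← H.index_mul_card]; ring
  have chain : kp G p * Fintype.card G ≤ (H.index * kp H p) * Fintype.card G := by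
    rw [e1, ← hmul]
    refine le_trans e2 ?_
    rw [e3]
    exact Nat.mul_le_mul_left _ e4
  exact Nat.le_of_mul_le_mul_right chain hGpos

lemma part2 (p : ℕ) (H : Subgroup G) :
    kp H p ≤ H.index * kp G p := by
  have hHpos : 0 < Nat.card H := Nat.card_pos
  have b1 : (A1F H p).card ≤ ∑ x ∈ (univ : Finset G).filter (pc p), (czF x).card := by
    rw [A1F, Finset.card_sigma]
    calc ∑ s ∈ univ.filter (fun s => s ∈ H ∧ pc p s), (czHF H s).card
        ≤ ∑ s ∈ univ.filter (fun s => s ∈ H ∧ pc p s), (czF s).card :=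
          Finset.sum_le_sum (fun s _ => Finset.card_le_card (czHF_subset H s))
      _ ≤ ∑ x ∈ (univ : Finset G).filter (pc p), (czF x).card := by
          apply Finset.sum_le_sum_of_subset
          intro a ha
          simp only [mem_filter, mem_univ, true_and] at ha ⊢
          exact ha.2
  have b2 : kp H p * Nat.card H ≤ kp G p * Fintype.card G := by
    rw [← A1F_card H p]
    exact b1.trans_eq (Apairs p)
  have hmul : kp G p * Fintype.card G = (H.index * kp G p) * Nat.card H := by
    rw [← Nat.card_eq_fintype_card, ← H.index_mul_card]; ring
  rw [hmul] at b2
  exact Nat.le_of_mul_le_mul_right b2 hHpos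

lemma part3 (p : ℕ) (hp : p.Prime) (H : Subgroup G) [H.Normal] :
    kp G p ≤ kp H p * kp (G ⧸ H) p := by
  haveI : Fintype (G ⧸ H) := Fintype.ofFinite _
  have hGpos : 0 < Fintype.card G := Fintype.card_pos
  have q1 : kp G p * Fintype.card G = ∑ x ∈ (univ : Finset G).filter (pc p), (czF x).card :=
    (Apairs p).symm
  have q2 : ∑ x ∈ (univ : Finset G).filter (pc p), (czF x).card
      ≤ ∑ x ∈ (univ : Finset G).filter (pc p),
          (czF (QuotientGroup.mk x : G ⧸ H)).card * (czHF H x).card :=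
    Finset.sum_le_sum (fun x _ => czF_le_quot H x)
  have q3 : ∑ x ∈ (univ : Finset G).filter (pc p),
        (czF (QuotientGroup.mk x : G ⧸ H)).card * (czHF H x).card
      = ∑ q : G ⧸ H, (czF q).card * (AqF H p q).card := by
    rw [← Finset.sum_fiberwise (s := (univ : Finset G).filter (pc p))
      (g := fun x => (QuotientGroup.mk x : G ⧸ H))
      (f := fun x => (czF (QuotientGroup.mk x : G ⧸ H)).card * (czHF H x).card)]
    apply Finset.sum_congr rfl
    intro q _
    rw [AqF, Finset.card_sigma, Finset.mul_sum]
    apply Finset.sum_congr rfl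
    intro x hx
    rw [(mem_filter.mp hx).2]
  have q4 : ∑ q : G ⧸ H, (czF q).card * (AqF H p q).card
      = ∑ q ∈ (univ : Finset (G ⧸ H)).filter (pc p), (czF q).card * (AqF H p q).card := by
    symm
    apply Finset.sum_subset (Finset.filter_subset _ _)
    intro q _ hq
    have hempty : AqF H p q = ∅ := by
      rw [Finset.eq_empty_iff_forall_notMem]
      rintro ⟨x, h⟩ hmem
      rw [AqF, Finset.mem_sigma] at hmem
      have hx1 := mem_filter.mp hmem.1
      have hxpc := (mem_filter.mp hx1.1).2
      have hpcq : pc p q := by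
        rw [← hx1.2]
        exact Nat.Coprime.coprime_dvd_left
          (orderOf_map_dvd (QuotientGroup.mk' H) x) hxpc
      simp only [mem_filter, mem_univ, true_and] at hq
      exact hq hpcq
    rw [hempty]
    simp
  have q5 : ∑ q ∈ (univ : Finset (G ⧸ H)).filter (pc p), (czF q).card * (AqF H p q).card
      ≤ (∑ q ∈ (univ : Finset (G ⧸ H)).filter (pc p), (czF q).card)
          * (kp H p * Nat.card H) := by
    rw [Finset.sum_mul]
    apply Finset.sum_le_sum
    intro q _
    exact Nat.mul_le_mul_left _ ((AqF_card_le H p hp q).trans_eq (A1F_card H p))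
  have q6 : ∑ q ∈ (univ : Finset (G ⧸ H)).filter (pc p), (czF q).card
      = kp (G ⧸ H) p * Fintype.card (G ⧸ H) := Apairs p
  have harith : (kp (G ⧸ H) p * Fintype.card (G ⧸ H)) * (kp H p * Nat.card H)
      = (kp H p * kp (G ⧸ H) p) * Fintype.card G := by
    rw [← Nat.card_eq_fintype_card (α := G ⧸ H), ← Subgroup.index_eq_card,
      ← Nat.card_eq_fintype_card (α := G), ← H.index_mul_card]
    ring
  have chain : kp G p * Fintype.card G ≤ (kp H p * kp (G ⧸ H) p) * Fintype.card G := by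
    rw [q1, ← harith, ← q6]
    exact le_trans q2 (by rw [q3, q4]; exact q5)
  exact Nat.le_of_mul_le_mul_right chain hGpos

end KpMain

theorem kp_le_of_index
    (G : Type*) [Group G] [Fintype G] (p : ℕ) (hp : p.Prime)
    (H : Subgroup G) (d : ℕ) (hd : H.index = d) :
    kp G p ≤ d * kp H p ∧ kp H p ≤ d * kp G p ∧
      ∀ (hN : H.Normal), letI := hN; kp G p ≤ kp H p * kp (G ⧸ H) p := by
  subst hd
  refine ⟨part1 p hp H, part2 p H, fun hN => ?_⟩
  letI := hN
  exact part3 p hp H
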